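/- For any fixed α ∈ (0,1), Zolotarev's function A(u) = [sin^α(αu) · sin^{1−α}((1−α)u) / sin u]^{1/(1−α)} is nondecreasing in u on (0, π), with lim_{u→0⁺} A(u) = (1−α)·α^{α/(1−α)} and lim_{u→π⁻} A(u) = +∞. -/

import Mathlib

open Real Set Filter Topology

set_option maxHeartbeats 1000000

lemma zol_key (α u : ℝ) (hα : α ∈ Ioo (0:ℝ) 1) (hu : u ∈ Ioo 0 π) :
    0 < α^2 * (Real.cos (α*u)/Real.sin (α*u)) + (1-α)^2 * (Real.cos ((1-α)*u)/Real.sin ((1-α)*u))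
      - Real.cos u / Real.sin u := by
  obtain ⟨hα0, hα1⟩ := hα
  obtain ⟨hu0, huπ⟩ := hu
  have hβ0 : (0:ℝ) < 1 - α := by linarith
  have hs1 : 0 < Real.sin (α*u) := Real.sin_pos_of_pos_of_lt_pi (by positivity) (by nlinarith)
  have hs2 : 0 < Real.sin ((1-α)*u) := Real.sin_pos_of_pos_of_lt_pi (by positivity) (by nlinarith)
  have hsu : 0 < Real.sin u := Real.sin_pos_of_pos_of_lt_pi hu0 huπ
  have he : u = α*u + (1-α)*u := by ring
  have hsin : Real.sin u = Real.sin (α*u) * Real.cos ((1-α)*u)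
      + Real.cos (α*u) * Real.sin ((1-α)*u) := by
    nth_rewrite 1 [he]; rw [Real.sin_add]
  have hcos : Real.cos u = Real.cos (α*u) * Real.cos ((1-α)*u)
      - Real.sin (α*u) * Real.sin ((1-α)*u) := by
    nth_rewrite 1 [he]; rw [Real.cos_add]
  set s1 := Real.sin (α*u)
  set c1 := Real.cos (α*u)
  set s2 := Real.sin ((1-α)*u)
  set c2 := Real.cos ((1-α)*u)
  have key : α^2 * (c1/s1) + (1-α)^2 * (c2/s2) - Real.cos u / Real.sin u
      = ((α*c1*s2 - (1-α)*s1*c2)^2 + (s1*s2)^2) / (s1 * s2 * Real.sin u) := by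
    have h3 : s1 * c2 + c1 * s2 ≠ 0 := by rw [← hsin]; exact hsu.ne'
    rw [hcos, hsin]
    field_simp
    ring
  rw [key]
  positivity

lemma zol_deriv (α : ℝ) (hα : α ∈ Ioo (0:ℝ) 1) (u : ℝ) (hu : u ∈ Ioo 0 π) :
    HasDerivAt (fun u => α * Real.log (Real.sin (α*u)) + (1-α) * Real.log (Real.sin ((1-α)*u))
        - Real.log (Real.sin u))
      (α^2 * (Real.cos (α*u)/Real.sin (α*u)) + (1-α)^2 * (Real.cos ((1-α)*u)/Real.sin ((1-α)*u))
        - Real.cos u / Real.sin u) u := by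
  obtain ⟨hα0, hα1⟩ := hα
  obtain ⟨hu0, huπ⟩ := hu
  have hβ0 : (0:ℝ) < 1 - α := by linarith
  have hs1 : 0 < Real.sin (α*u) := Real.sin_pos_of_pos_of_lt_pi (by positivity) (by nlinarith)
  have hs2 : 0 < Real.sin ((1-α)*u) := Real.sin_pos_of_pos_of_lt_pi (by positivity) (by nlinarith)
  have hsu : 0 < Real.sin u := Real.sin_pos_of_pos_of_lt_pi hu0 huπ
  have d1 : HasDerivAt (fun u : ℝ => Real.sin (α*u)) (Real.cos (α*u) * (α * 1)) u :=
    (Real.hasDerivAt_sin (α*u)).comp u ((hasDerivAt_id u).const_mul α)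
  have d2 : HasDerivAt (fun u : ℝ => Real.sin ((1-α)*u)) (Real.cos ((1-α)*u) * ((1-α) * 1)) u :=
    (Real.hasDerivAt_sin ((1-α)*u)).comp u ((hasDerivAt_id u).const_mul (1-α))
  have d3 := ((d1.log hs1.ne').const_mul α).add ((d2.log hs2.ne').const_mul (1-α))
  have d4 := d3.sub ((Real.hasDerivAt_sin u).log hsu.ne')
  refine d4.congr_deriv ?_
  ring

theorem stmt_8 (α : ℝ) (hα : α ∈ Ioo (0 : ℝ) 1)
    (A : ℝ → ℝ)
    (hA : ∀ u, A u =
      ((Real.sin (α * u)) ^ α * (Real.sin ((1 - α) * u)) ^ (1 - α) / Real.sin u)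
        ^ (1 / (1 - α))) :
    MonotoneOn A (Ioo 0 π) ∧
    Tendsto A (𝓝[>] 0) (𝓝 ((1 - α) * α ^ (α / (1 - α)))) ∧
    Tendsto A (𝓝[<] π) atTop := by
  obtain ⟨hα0, hα1⟩ := hα
  have hβ0 : (0:ℝ) < 1 - α := by linarith
  have hc : (0:ℝ) < 1/(1-α) := by positivity
  set g : ℝ → ℝ := fun u => α * Real.log (Real.sin (α*u)) + (1-α) * Real.log (Real.sin ((1-α)*u))
      - Real.log (Real.sin u) with hg
  set B : ℝ → ℝ := fun u => Real.sin (α*u) ^ α * Real.sin ((1-α)*u) ^ (1-α) / Real.sin u with hB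
  have hAB : ∀ u, A u = B u ^ (1/(1-α)) := hA
  have hposall : ∀ u ∈ Ioo (0:ℝ) π,
      0 < Real.sin (α*u) ∧ 0 < Real.sin ((1-α)*u) ∧ 0 < Real.sin u := by
    rintro u ⟨hu0, huπ⟩
    exact ⟨Real.sin_pos_of_pos_of_lt_pi (by positivity) (by nlinarith),
      Real.sin_pos_of_pos_of_lt_pi (by positivity) (by nlinarith),
      Real.sin_pos_of_pos_of_lt_pi hu0 huπ⟩
  have hBg : ∀ u ∈ Ioo (0:ℝ) π, B u = Real.exp (g u) := by
    intro u hu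
    obtain ⟨hs1, hs2, hsu⟩ := hposall u hu
    have : B u = Real.exp (Real.log (Real.sin (α*u)) * α)
        * Real.exp (Real.log (Real.sin ((1-α)*u)) * (1-α)) / Real.exp (Real.log (Real.sin u)) := by
      rw [hB]
      simp only
      rw [Real.rpow_def_of_pos hs1, Real.rpow_def_of_pos hs2, Real.exp_log hsu]
    rw [this, ← Real.exp_add, ← Real.exp_sub]
    congr 1
    rw [hg]; ring
  have hAexp : ∀ u ∈ Ioo (0:ℝ) π, A u = Real.exp (g u * (1/(1-α))) := by
    intro u hu
    rw [hAB u, hBg u hu, Real.rpow_def_of_pos (Real.exp_pos _), Real.log_exp]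
  -- monotonicity
  have hgmono : StrictMonoOn g (Ioo 0 π) := by
    apply strictMonoOn_of_deriv_pos (convex_Ioo 0 π)
    · exact fun u hu => (zol_deriv α ⟨hα0, hα1⟩ u hu).continuousAt.continuousWithinAt
    · intro u hu
      rw [interior_Ioo] at hu
      rw [(zol_deriv α ⟨hα0, hα1⟩ u hu).deriv]
      exact zol_key α u ⟨hα0, hα1⟩ hu
  have hmono : MonotoneOn A (Ioo 0 π) := by
    intro x hx y hy hxy
    rw [hAexp x hx, hAexp y hy]
    exact Real.exp_le_exp.mpr
      (mul_le_mul_of_nonneg_right (hgmono.monotoneOn hx hy hxy) hc.le)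
  have hIoo0 : Ioo (0:ℝ) π ∈ 𝓝[>] (0:ℝ) := Ioo_mem_nhdsGT_of_mem ⟨le_refl 0, Real.pi_pos⟩
  have hIooπ : Ioo (0:ℝ) π ∈ 𝓝[<] π := Ioo_mem_nhdsLT_of_mem ⟨Real.pi_pos, le_refl π⟩
  -- limit at 0
  have T0 : Tendsto (fun x : ℝ => Real.sin x / x) (𝓝[≠] (0:ℝ)) (𝓝 1) := by
    have h := hasDerivAt_iff_tendsto_slope.mp (Real.hasDerivAt_sin 0)
    simpa [slope_fun_def, Real.sin_zero, Real.cos_zero, div_eq_inv_mul] using h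
  have Tratio : ∀ c : ℝ, 0 < c →
      Tendsto (fun u : ℝ => Real.sin (c*u) / (c*u)) (𝓝[>] (0:ℝ)) (𝓝 1) := by
    intro c hc0
    apply T0.comp
    apply tendsto_nhdsWithin_of_tendsto_nhds_of_eventually_within
    · have : Tendsto (fun u : ℝ => c*u) (𝓝 (0:ℝ)) (𝓝 (c*0)) :=
        (continuous_const.mul continuous_id).tendsto 0
      simpa using this.mono_left nhdsWithin_le_nhds
    · filter_upwards [self_mem_nhdsWithin] with u hu
      exact (mul_pos hc0 hu).ne'
  have Trpow : ∀ c e : ℝ, 0 < c →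
      Tendsto (fun u : ℝ => (Real.sin (c*u) / (c*u)) ^ e) (𝓝[>] (0:ℝ)) (𝓝 1) := by
    intro c e hc0
    have := (Real.continuousAt_rpow_const 1 e (Or.inl one_ne_zero)).tendsto.comp (Tratio c hc0)
    simpa [Real.one_rpow, Function.comp_def] using this
  have Tinv : Tendsto (fun u : ℝ => u / Real.sin u) (𝓝[>] (0:ℝ)) (𝓝 1) := by
    have Ts : Tendsto (fun u : ℝ => Real.sin u / u) (𝓝[>] (0:ℝ)) (𝓝 1) :=
      T0.mono_left (nhdsWithin_mono 0 (fun x hx => ne_of_gt hx))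
    have := Ts.inv₀ one_ne_zero
    simp only [inv_div, inv_one] at this
    exact this
  set L : ℝ := α^α * (1-α)^(1-α) with hL
  have hLpos : 0 < L := by rw [hL]; positivity
  have TB0 : Tendsto B (𝓝[>] (0:ℝ)) (𝓝 L) := by
    have TP : Tendsto (fun u : ℝ => (Real.sin (α*u)/(α*u))^α * (Real.sin ((1-α)*u)/((1-α)*u))^(1-α)
        * (u / Real.sin u) * L) (𝓝[>] (0:ℝ)) (𝓝 (1 * 1 * 1 * L)) :=
      (((Trpow α α hα0).mul (Trpow (1-α) (1-α) hβ0)).mul Tinv).mul_const L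
    rw [show (1:ℝ) * 1 * 1 * L = L by ring] at TP
    apply TP.congr'
    filter_upwards [hIoo0] with u hu
    obtain ⟨hs1, hs2, hsu⟩ := hposall u hu
    obtain ⟨hu0, huπ⟩ := hu
    have q1 : Real.sin (α*u) ^ α = (Real.sin (α*u)/(α*u))^α * (α^α * u^α) := by
      rw [← Real.mul_rpow hα0.le hu0.le,
        ← Real.mul_rpow (by positivity) (by positivity)]
      congr 1
      field_simp
    have q2 : Real.sin ((1-α)*u) ^ (1-α)
        = (Real.sin ((1-α)*u)/((1-α)*u))^(1-α) * ((1-α)^(1-α) * u^(1-α)) := by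
      rw [← Real.mul_rpow hβ0.le hu0.le,
        ← Real.mul_rpow (by positivity) (by positivity)]
      congr 1
      field_simp
    have q3 : u ^ α * u ^ (1-α) = u := by
      rw [← Real.rpow_add hu0]; simp
    calc (Real.sin (α*u)/(α*u))^α * (Real.sin ((1-α)*u)/((1-α)*u))^(1-α) * (u / Real.sin u) * L
        = (Real.sin (α*u)/(α*u))^α * (Real.sin ((1-α)*u)/((1-α)*u))^(1-α) * L
          * (u ^ α * u ^ (1-α)) / Real.sin u := by rw [q3]; ring
      _ = B u := by rw [hB]; simp only; rw [q1, q2, hL]; ring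
  have TA0 : Tendsto A (𝓝[>] (0:ℝ)) (𝓝 ((1 - α) * α ^ (α / (1 - α)))) := by
    have h := (Real.continuousAt_rpow_const L (1/(1-α)) (Or.inl hLpos.ne')).tendsto.comp TB0
    have hval : L ^ (1/(1-α)) = (1 - α) * α ^ (α / (1 - α)) := by
      rw [hL, Real.mul_rpow (by positivity) (by positivity),
        ← Real.rpow_mul hα0.le, ← Real.rpow_mul hβ0.le, mul_one_div, mul_one_div,
        div_self hβ0.ne', Real.rpow_one]
      ring
    rw [hval] at h
    have : A = fun u => B u ^ (1/(1-α)) := funext hAB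
    rw [this]
    exact h
  -- limit at π
  have TAπ : Tendsto A (𝓝[<] π) atTop := by
    have hs1π : 0 < Real.sin (α*π) :=
      Real.sin_pos_of_pos_of_lt_pi (by positivity) (by nlinarith [Real.pi_pos])
    have hs2π : 0 < Real.sin ((1-α)*π) :=
      Real.sin_pos_of_pos_of_lt_pi (by positivity) (by nlinarith [Real.pi_pos])
    have Tnum : Tendsto (fun u : ℝ => Real.sin (α*u) ^ α * Real.sin ((1-α)*u) ^ (1-α))
        (𝓝[<] π) (𝓝 (Real.sin (α*π) ^ α * Real.sin ((1-α)*π) ^ (1-α))) := by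
      have h1 : Tendsto (fun u : ℝ => Real.sin (α*u)) (𝓝 π) (𝓝 (Real.sin (α*π))) :=
        ((Real.continuous_sin.comp (continuous_const.mul continuous_id)).tendsto π)
      have h2 : Tendsto (fun u : ℝ => Real.sin ((1-α)*u)) (𝓝 π) (𝓝 (Real.sin ((1-α)*π))) :=
        ((Real.continuous_sin.comp (continuous_const.mul continuous_id)).tendsto π)
      have h1' := (Real.continuousAt_rpow_const (Real.sin (α*π)) α (Or.inl hs1π.ne')).tendsto.comp h1
      have h2' := (Real.continuousAt_rpow_const (Real.sin ((1-α)*π)) (1-α) (Or.inl hs2π.ne')).tendsto.comp h2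
      have h3 := (h1'.mul h2').mono_left (nhdsWithin_le_nhds (s := Iio π))
      simpa [Function.comp] using h3
    have Tsin : Tendsto Real.sin (𝓝[<] π) (𝓝[>] (0:ℝ)) := by
      apply tendsto_nhdsWithin_of_tendsto_nhds_of_eventually_within
      · have := (Real.continuous_sin.tendsto π).mono_left (nhdsWithin_le_nhds (s := Iio π))
        simpa [Real.sin_pi] using this
      · filter_upwards [hIooπ] with u hu
        exact (hposall u hu).2.2
    have Tden : Tendsto (fun u : ℝ => (Real.sin u)⁻¹) (𝓝[<] π) atTop :=
      tendsto_inv_nhdsGT_zero.comp Tsin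
    have TBπ : Tendsto B (𝓝[<] π) atTop := by
      have := Tnum.pos_mul_atTop (by positivity) Tden
      apply this.congr
      intro u
      rw [hB]; simp only; rw [div_eq_mul_inv]
    have := (tendsto_rpow_atTop hc).comp TBπ
    have hAe : A = fun u => B u ^ (1/(1-α)) := funext hAB
    rw [hAe]
    exact this
  exact ⟨hmono, TA0, TAπ⟩
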